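/- In the quasi-shuffle Hopf algebra QS(A), for any nonempty pure tensor 𝐚 = a_1⊗...⊗a_n the identity (−1)^n · sum_{L ⊨ n} L∘𝐚^r = sum_{i=0}^{n−1} (−1)^{i+1} (sum_{L ⊨ i} L∘(a_i⊗a_{i−1}⊗...⊗a_1)) * (a_{i+1}⊗...⊗a_n) holds, where ⊨ denotes compositions and * the quasi-shuffle product. -/

import Mathlib

open TensorAlgebra in
/-- The pure tensor `a_1 ⊗ ⋯ ⊗ a_n ∈ T(A)`, realized inside the tensor algebra
as the concatenation product `ι a_1 ⋯ ι a_n`. -/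
noncomputable def pureTensor (k : Type*) {A : Type*} [CommRing k] [CommRing A]
    [Algebra k A] (b : List A) : TensorAlgebra k A :=
  (b.map fun a => TensorAlgebra.ι k a).prod

/-- Compositions of `n`: lists of positive integers with sum `n`. -/
def Comps (n : ℕ) : Set (List ℕ) := {L | (∀ l ∈ L, 0 < l) ∧ L.sum = n}

/-- `L ∘ 𝐛`: merge consecutive blocks of `𝐛` of sizes given by `L`, multiplying
the entries of each block in `A`. -/
def blocksMul {A : Type*} [CommRing A] : List ℕ → List A → List A
  | [], _ => []
  | l :: L, b => (b.take l).prod :: blocksMul L (b.drop l)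

def compsF : ℕ → List (List ℕ)
  | 0 => [[]]
  | (n+1) => (List.range (n+1)).attach.flatMap
      (fun j => (compsF j.1).map (fun L => (n+1-j.1) :: L))
  decreasing_by exact List.mem_range.mp j.2


lemma sum_compsF_succ {M : Type*} [AddCommMonoid M] (n : ℕ) (f : List ℕ → M) :
    ((compsF (n+1)).map f).sum
      = ∑ j ∈ Finset.range (n+1), ((compsF j).map (fun L => f ((n+1-j) :: L))).sum := by
  rw [compsF, List.map_flatMap]
  rw [show ((List.range (n+1)).attach.flatMap
      (fun j => ((compsF j.1).map (fun L => (n+1-j.1) :: L)).map f)).sum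
      = ((List.range (n+1)).attach.map
        (fun j => (((compsF j.1).map (fun L => (n+1-j.1) :: L)).map f).sum)).sum by
    rw [List.flatMap, List.sum_flatten, List.map_map]; rfl]
  rw [List.attach_map_val (l := List.range (n+1))
    (f := fun m => (((compsF m).map (fun L => (n+1-m) :: L)).map f).sum)]
  simp only [List.map_map]
  rfl

lemma mem_compsF {n : ℕ} {L : List ℕ} : L ∈ compsF n ↔ (∀ l ∈ L, 0 < l) ∧ L.sum = n := by
  induction n using Nat.strong_induction_on generalizing L with
  | _ n ih =>
    match n with
    | 0 =>
      rw [compsF]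
      simp only [List.mem_singleton]
      constructor
      · rintro rfl; simp
      · rintro ⟨hpos, hsum⟩
        cases L with
        | nil => rfl
        | cons h t =>
          have h1 := hpos h (by simp)
          simp only [List.sum_cons] at hsum
          omega
    | n+1 =>
      rw [compsF]
      rw [List.mem_flatMap]
      constructor
      · rintro ⟨j, -, hL⟩
        rw [List.mem_map] at hL
        obtain ⟨M, hM, rfl⟩ := hL
        have hj' : (j : ℕ) < n + 1 := List.mem_range.mp j.2
        obtain ⟨hpos, hsum⟩ := (ih j hj').mp hM
        refine ⟨?_, ?_⟩
        · rintro l hl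
          rcases List.mem_cons.mp hl with rfl | hl
          · omega
          · exact hpos l hl
        · simp only [List.sum_cons, hsum]; omega
      · rintro ⟨hpos, hsum⟩
        cases L with
        | nil => simp at hsum
        | cons h t =>
          have hh : 0 < h := hpos h (by simp)
          simp only [List.sum_cons] at hsum
          have hlt : n + 1 - h < n + 1 := by omega
          refine ⟨⟨n + 1 - h, List.mem_range.mpr hlt⟩, List.mem_attach _ _, ?_⟩
          rw [List.mem_map]
          refine ⟨t, (ih _ hlt).mpr ⟨fun l hl => hpos l (by simp [hl]), by omega⟩, ?_⟩
          have : n + 1 - (n + 1 - h) = h := by omega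
          rw [this]

lemma nodup_compsF (n : ℕ) : (compsF n).Nodup := by
  induction n using Nat.strong_induction_on with
  | _ n ih =>
    match n with
    | 0 => rw [compsF]; simp
    | n+1 =>
      rw [compsF]
      rw [List.nodup_flatMap]
      constructor
      · rintro ⟨j, hj⟩ -
        exact (ih j (List.mem_range.mp hj)).map (fun a b h => by simpa using h)
      · have hR : (List.range (n+1)).Pairwise (fun j₁ j₂ =>
            List.Disjoint ((compsF j₁).map (fun L => (n+1-j₁) :: L))
              ((compsF j₂).map (fun L => (n+1-j₂) :: L))) := by
          refine (List.pairwise_lt_range (n := n+1)).imp_of_mem ?_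
          intro j₁ j₂ h1 h2 hlt x hx1 hx2
          rw [List.mem_map] at hx1 hx2
          obtain ⟨M₁, -, rfl⟩ := hx1
          obtain ⟨M₂, -, he⟩ := hx2
          have h1' : j₁ < n + 1 := List.mem_range.mp h1
          have h2' : j₂ < n + 1 := List.mem_range.mp h2
          have : n + 1 - j₂ = n + 1 - j₁ := by
            exact (List.cons.injEq _ _ _ _ ▸ he).1
          omega
        have := (List.pairwise_map (f := (Subtype.val : {x // x ∈ List.range (n+1)} → ℕ))
          (R := fun j₁ j₂ =>
            List.Disjoint ((compsF j₁).map (fun L => (n+1-j₁) :: L))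
              ((compsF j₂).map (fun L => (n+1-j₂) :: L)))
          (l := (List.range (n+1)).attach)).mp
          (by rw [List.attach_map_subtype_val]; exact hR)
        exact this

lemma finsum_comps {M : Type*} [AddCommMonoid M] (n : ℕ) (f : List ℕ → M) :
    ∑ᶠ L ∈ Comps n, f L = ((compsF n).map f).sum := by
  have h : Comps n = ↑(compsF n).toFinset := by
    ext L; simp [Comps, mem_compsF]
  rw [h, finsum_mem_coe_finset, List.sum_toFinset _ (nodup_compsF n)]

section main
variable {k A : Type*} [CommRing k] [CommRing A] [Algebra k A]

open TensorAlgebra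

lemma pureTensor_nil : pureTensor k ([] : List A) = 1 := by simp [pureTensor]
lemma pureTensor_cons (x : A) (b : List A) :
    pureTensor k (x :: b) = ι k x * pureTensor k b := by simp [pureTensor]

noncomputable def Tt (k : Type*) {A : Type*} [CommRing k] [CommRing A] [Algebra k A]
    (a : List A) (j : ℕ) : TensorAlgebra k A :=
  ((compsF j).map (fun L => pureTensor k (blocksMul L (a.take j).reverse))).sum

def qprod (a : List A) (m j : ℕ) : A := (((a.take j).reverse).take (j - m)).prod

lemma Tt_zero (a : List A) : Tt k a 0 = 1 := by
  rw [Tt, compsF]; simp [blocksMul, pureTensor]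

lemma drop_rev_take (a : List A) {m j : ℕ} (hm : m ≤ j) (hj : j ≤ a.length) :
    ((a.take j).reverse).drop (j - m) = (a.take m).reverse := by
  rw [List.reverse_take, List.drop_drop, List.reverse_take]
  congr 1
  omega

lemma Tt_succ (a : List A) {j : ℕ} (hj : j < a.length) :
    Tt k a (j+1) = ∑ m ∈ Finset.range (j+1), ι k (qprod a m (j+1)) * Tt k a m := by
  rw [Tt, sum_compsF_succ]
  refine Finset.sum_congr rfl ?_
  intro m hm
  have hm' : m ≤ j := by simpa [Nat.lt_succ_iff] using hm
  have hdrop : ((a.take (j+1)).reverse).drop (j + 1 - m) = (a.take m).reverse :=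
    drop_rev_take a (by omega) (by omega)
  have : ∀ L, pureTensor k (blocksMul ((j+1-m) :: L) (a.take (j+1)).reverse)
      = ι k (qprod a m (j+1)) * pureTensor k (blocksMul L (a.take m).reverse) := by
    intro L
    rw [blocksMul, pureTensor_cons, hdrop]
    rfl
  simp only [this]
  rw [List.sum_map_mul_left]
  rfl

lemma qprod_last (a : List A) {j : ℕ} (hj : j < a.length) :
    qprod a j (j+1) = a[j] := by
  rw [qprod]
  have h1 : a.take (j+1) = a.take j ++ [a[j]] := by
    rw [List.take_succ, List.getElem?_eq_getElem hj]; rfl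
  rw [h1, List.reverse_append]
  simp

lemma qprod_mul (a : List A) {m j : ℕ} (hm : m ≤ j) (hj : j < a.length) :
    qprod a m j * a[j] = qprod a m (j+1) := by
  have h1 : a.take (j+1) = a.take j ++ [a[j]] := by
    rw [List.take_succ, List.getElem?_eq_getElem hj]; rfl
  rw [qprod, qprod, h1, List.reverse_append]
  have h2 : j + 1 - m = (j - m) + 1 := by omega
  rw [h2]
  simp [mul_comm]

end main

section main2
variable {k A : Type*} [CommRing k] [CommRing A] [Algebra k A]
  (mqs : TensorAlgebra k A →ₗ[k] TensorAlgebra k A →ₗ[k] TensorAlgebra k A)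
  (a : List A)

open TensorAlgebra

noncomputable def Cf (j i : ℕ) : TensorAlgebra k A :=
  mqs (Tt k a j) (pureTensor k (a.drop i))

noncomputable def Df (j : ℕ) : TensorAlgebra k A :=
  ∑ m ∈ Finset.range j, ι k (qprod a m j) * Cf mqs a m j

lemma P_succ {i : ℕ} (hi : i < a.length) :
    pureTensor k (a.drop i) = ι k a[i] * pureTensor k (a.drop (i+1)) := by
  rw [List.drop_eq_getElem_cons hi, pureTensor_cons]

lemma C_zero (hleft : ∀ x : TensorAlgebra k A, mqs 1 x = x) (i : ℕ) :
    Cf mqs a 0 i = pureTensor k (a.drop i) := by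
  rw [Cf, Tt_zero, hleft]

lemma C_top (hright : ∀ x : TensorAlgebra k A, mqs x 1 = x) (j : ℕ) :
    Cf mqs a j a.length = Tt k a j := by
  rw [Cf, List.drop_length, pureTensor_nil, hright]

lemma C_expand {j i : ℕ} (hj : j < a.length) (hi : i ≤ a.length) :
    Cf mqs a (j+1) i = ∑ m ∈ Finset.range (j+1),
      mqs (ι k (qprod a m (j+1)) * Tt k a m) (pureTensor k (a.drop i)) := by
  rw [Cf, Tt_succ a hj, map_sum, LinearMap.sum_apply]

lemma key (hrec : ∀ (x y : A) (u v : TensorAlgebra k A),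
      mqs (ι k x * u) (ι k y * v) =
        ι k x * mqs u (ι k y * v) + ι k y * mqs (ι k x * u) v +
          ι k (x * y) * mqs u v)
    {j : ℕ} (hj1 : 1 ≤ j) (hj : j < a.length) :
    Cf mqs a j j = Df mqs a j + Df mqs a (j+1) := by
  obtain ⟨j, rfl⟩ : ∃ j'', j = j'' + 1 := ⟨j - 1, by omega⟩
  have hju : j + 1 < a.length := hj
  rw [C_expand mqs a (by omega) (by omega)]
  have hterm : ∀ m ∈ Finset.range (j+1),
      mqs (ι k (qprod a m (j+1)) * Tt k a m) (pureTensor k (a.drop (j+1)))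
        = ι k (qprod a m (j+1)) * Cf mqs a m (j+1)
          + ι k a[j+1] * mqs (ι k (qprod a m (j+1)) * Tt k a m) (pureTensor k (a.drop (j+2)))
          + ι k (qprod a m (j+2)) * Cf mqs a m (j+2) := by
    intro m hm
    have hm' : m < j + 1 := Finset.mem_range.mp hm
    rw [P_succ a hju, hrec, ← P_succ a hju, ← qprod_mul a (by omega) hju]
    rfl
  rw [Finset.sum_congr rfl hterm]
  rw [Finset.sum_add_distrib, Finset.sum_add_distrib]
  have h2 : ∑ m ∈ Finset.range (j+1),
      ι k a[j+1] * mqs (ι k (qprod a m (j+1)) * Tt k a m) (pureTensor k (a.drop (j+2)))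
      = ι k (qprod a (j+1) (j+2)) * Cf mqs a (j+1) (j+2) := by
    rw [← Finset.mul_sum, qprod_last a hju, Cf,
      Tt_succ a (show j < a.length by omega), map_sum, LinearMap.sum_apply]
  rw [h2, Df, Df, Finset.sum_range_succ
    (fun m => ι k (qprod a m (j+2)) * Cf mqs a m (j+2)) (j+1)]
  abel

lemma C00 (hleft : ∀ x : TensorAlgebra k A, mqs 1 x = x) (hn : 0 < a.length) :
    Cf mqs a 0 0 = Df mqs a 1 := by
  rw [Df, Finset.sum_range_one, qprod_last a hn, C_zero mqs a hleft, Cf, Tt_zero,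
    hleft]
  exact P_succ a hn

lemma Cnn (hright : ∀ x : TensorAlgebra k A, mqs x 1 = x) (hn : 0 < a.length) :
    Cf mqs a a.length a.length = Df mqs a a.length := by
  rw [C_top mqs a hright]
  obtain ⟨n', hn'⟩ : ∃ n', a.length = n' + 1 := ⟨a.length - 1, by omega⟩
  rw [hn', Tt_succ a (show n' < a.length by omega), Df]
  refine Finset.sum_congr rfl ?_
  intro m hm
  rw [← hn', C_top mqs a hright]

end main2

section main3
variable {k A : Type*} [CommRing k] [CommRing A] [Algebra k A]
  (mqs : TensorAlgebra k A →ₗ[k] TensorAlgebra k A →ₗ[k] TensorAlgebra k A)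
  (a : List A)

open TensorAlgebra

lemma telescope
    (hleft : ∀ x : TensorAlgebra k A, mqs 1 x = x)
    (hrec : ∀ (x y : A) (u v : TensorAlgebra k A),
      mqs (ι k x * u) (ι k y * v) =
        ι k x * mqs u (ι k y * v) + ι k y * mqs (ι k x * u) v +
          ι k (x * y) * mqs u v) :
    ∀ m, m < a.length →
      ∑ i ∈ Finset.range (m+1), ((-1:ℤ)^i) • Cf mqs a i i
        = ((-1:ℤ)^m) • Df mqs a (m+1) := by
  intro m
  induction m with
  | zero =>
    intro hm
    simp only [Finset.sum_range_one, pow_zero, one_smul, zero_add]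
    exact C00 mqs a hleft hm
  | succ m ihm =>
    intro hm
    rw [Finset.sum_range_succ, ihm (by omega),
      key mqs a hrec (by omega) hm]
    simp only [pow_succ, mul_neg_one, neg_smul, smul_add]
    abel

theorem stmt9' (hleft : ∀ x : TensorAlgebra k A, mqs 1 x = x)
    (hright : ∀ x : TensorAlgebra k A, mqs x 1 = x)
    (hrec : ∀ (x y : A) (u v : TensorAlgebra k A),
      mqs (ι k x * u) (ι k y * v) =
        ι k x * mqs u (ι k y * v) + ι k y * mqs (ι k x * u) v +
          ι k (x * y) * mqs u v)
    (ha : a ≠ []) :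
    ((-1 : ℤ) ^ a.length) •
        ∑ᶠ L ∈ Comps a.length, pureTensor k (blocksMul L a.reverse) =
      ∑ i ∈ Finset.range a.length, ((-1 : ℤ) ^ (i + 1)) •
        mqs (∑ᶠ L ∈ Comps i, pureTensor k (blocksMul L (a.take i).reverse))
          (pureTensor k (a.drop i)) := by
  have hn : 0 < a.length := List.length_pos_iff.mpr ha
  have hL : ∑ᶠ L ∈ Comps a.length, pureTensor k (blocksMul L a.reverse)
      = Tt k a a.length := by
    rw [finsum_comps, Tt, List.take_length]
  have hR : ∀ i, ∑ᶠ L ∈ Comps i, pureTensor k (blocksMul L (a.take i).reverse)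
      = Tt k a i := fun i => finsum_comps _ _
  rw [hL]
  have hCi : ∀ i ∈ Finset.range a.length, ((-1 : ℤ) ^ (i + 1)) •
        mqs (∑ᶠ L ∈ Comps i, pureTensor k (blocksMul L (a.take i).reverse))
          (pureTensor k (a.drop i))
      = ((-1 : ℤ) ^ (i+1)) • Cf mqs a i i := by
    intro i hi
    rw [hR i]; rfl
  rw [Finset.sum_congr rfl hCi]
  -- RHS = -∑ (-1)^i • C i i
  have hflip : ∑ i ∈ Finset.range a.length, ((-1 : ℤ) ^ (i+1)) • Cf mqs a i i
      = - ∑ i ∈ Finset.range a.length, ((-1 : ℤ) ^ i) • Cf mqs a i i := by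
    rw [← Finset.sum_neg_distrib]
    refine Finset.sum_congr rfl fun i _ => ?_
    rw [pow_succ, mul_neg_one, neg_smul]
  obtain ⟨n', hn'⟩ : ∃ n', a.length = n' + 1 := ⟨a.length - 1, by omega⟩
  have htel := telescope mqs a hleft hrec n' (by omega)
  have hTD : Tt k a a.length = Df mqs a a.length := by
    rw [← Cnn mqs a hright hn, C_top mqs a hright]
  rw [hflip, hTD, hn', htel, pow_succ, mul_neg_one, neg_smul]

end main3


/-- in the quasi-shuffle algebra `QS(A)`, for a nonempty pure
tensor `𝐚 = a_1 ⊗ ⋯ ⊗ a_n` one has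
`(−1)^n ∑_{L ⊨ n} L∘𝐚^r = ∑_{i=0}^{n−1} (−1)^{i+1} (∑_{L ⊨ i} L∘(a_i⊗…⊗a_1)) * (a_{i+1}⊗…⊗a_n)`. -/
theorem stmt9 {k A : Type*} [CommRing k] [CommRing A] [Algebra k A] [Algebra ℚ k]
    (mqs : TensorAlgebra k A →ₗ[k] TensorAlgebra k A →ₗ[k] TensorAlgebra k A)
    (hleft : ∀ x : TensorAlgebra k A, mqs 1 x = x)
    (hright : ∀ x : TensorAlgebra k A, mqs x 1 = x)
    (hrec : ∀ (a b : A) (x y : TensorAlgebra k A),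
      mqs (TensorAlgebra.ι k a * x) (TensorAlgebra.ι k b * y) =
        TensorAlgebra.ι k a * mqs x (TensorAlgebra.ι k b * y) +
          TensorAlgebra.ι k b * mqs (TensorAlgebra.ι k a * x) y +
          TensorAlgebra.ι k (a * b) * mqs x y)
    (a : List A) (ha : a ≠ []) :
    ((-1 : ℤ) ^ a.length) •
        ∑ᶠ L ∈ Comps a.length, pureTensor k (blocksMul L a.reverse) =
      ∑ i ∈ Finset.range a.length, ((-1 : ℤ) ^ (i + 1)) •
        mqs (∑ᶠ L ∈ Comps i, pureTensor k (blocksMul L (a.take i).reverse))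
          (pureTensor k (a.drop i)) := by
  exact stmt9' mqs a hleft hright hrec ha
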